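/- For every natural number m ≥ 1, there is no exceptional representation ρ of the quiver Q2 whose dimension vector (dim V_b, dim V_q, dim V_p, dim V_e) equals (m, m+1, m, m), (m, m, m+1, m), (m+1, m, m+1, m+1), or (m+1, m+1, m, m+1). -/
import Mathlib


noncomputable section

open Module

universe u

/-- A representation of the square quiver `Q2`
(vertices b, p, q, e; arrows b→p, b→q, p→e, q→e) over the field `k`,
with finite-dimensional vector spaces at the vertices. -/
structure RepQ2 (k : Type u) [Field k] where
  Vb : Type u
  Vp : Type u
  Vq : Type u
  Ve : Type u
  [acgb : AddCommGroup Vb]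
  [acgp : AddCommGroup Vp]
  [acgq : AddCommGroup Vq]
  [acge : AddCommGroup Ve]
  [modb : Module k Vb]
  [modp : Module k Vp]
  [modq : Module k Vq]
  [mode : Module k Ve]
  [fdb : FiniteDimensional k Vb]
  [fdp : FiniteDimensional k Vp]
  [fdq : FiniteDimensional k Vq]
  [fde : FiniteDimensional k Ve]
  rbp : Vb →ₗ[k] Vp
  rbq : Vb →ₗ[k] Vq
  rpe : Vp →ₗ[k] Ve
  rqe : Vq →ₗ[k] Ve

attribute [instance] RepQ2.acgb RepQ2.acgp RepQ2.acgq RepQ2.acge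
  RepQ2.modb RepQ2.modp RepQ2.modq RepQ2.mode
  RepQ2.fdb RepQ2.fdp RepQ2.fdq RepQ2.fde

namespace RepQ2

variable {k : Type u} [Field k]

/-- The space of morphisms of representations `ρ → ρ'`:
quadruples of linear maps commuting with the structure maps. -/
def homSpace (ρ ρ' : RepQ2 k) :
    Submodule k ((ρ.Vb →ₗ[k] ρ'.Vb) × (ρ.Vp →ₗ[k] ρ'.Vp) ×
      (ρ.Vq →ₗ[k] ρ'.Vq) × (ρ.Ve →ₗ[k] ρ'.Ve)) where
  carrier := { f | f.2.1 ∘ₗ ρ.rbp = ρ'.rbp ∘ₗ f.1 ∧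
                   f.2.2.1 ∘ₗ ρ.rbq = ρ'.rbq ∘ₗ f.1 ∧
                   f.2.2.2 ∘ₗ ρ.rpe = ρ'.rpe ∘ₗ f.2.1 ∧
                   f.2.2.2 ∘ₗ ρ.rqe = ρ'.rqe ∘ₗ f.2.2.1 }
  add_mem' := by
    rintro f g ⟨h1, h2, h3, h4⟩ ⟨h1', h2', h3', h4'⟩
    refine ⟨?_, ?_, ?_, ?_⟩ <;>
      simp only [Prod.fst_add, Prod.snd_add, LinearMap.add_comp, LinearMap.comp_add,
        h1, h2, h3, h4, h1', h2', h3', h4']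
  zero_mem' := by
    refine ⟨?_, ?_, ?_, ?_⟩ <;> simp
  smul_mem' := by
    rintro c f ⟨h1, h2, h3, h4⟩
    refine ⟨?_, ?_, ?_, ?_⟩ <;>
      simp only [Prod.smul_fst, Prod.smul_snd, LinearMap.smul_comp, LinearMap.comp_smul,
        h1, h2, h3, h4]

/-- `hom ρ ρ'` is the `k`-dimension of the space of morphisms of representations `ρ → ρ'`. -/
def hom (ρ ρ' : RepQ2 k) : ℕ := finrank k (homSpace ρ ρ')

/-- The linear map `Φ` whose cokernel computes `Ext¹(ρ, ρ')`. -/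
def phi (ρ ρ' : RepQ2 k) :
    ((ρ.Vb →ₗ[k] ρ'.Vb) × (ρ.Vp →ₗ[k] ρ'.Vp) ×
      (ρ.Vq →ₗ[k] ρ'.Vq) × (ρ.Ve →ₗ[k] ρ'.Ve)) →ₗ[k]
    ((ρ.Vb →ₗ[k] ρ'.Vp) × (ρ.Vb →ₗ[k] ρ'.Vq) ×
      (ρ.Vp →ₗ[k] ρ'.Ve) × (ρ.Vq →ₗ[k] ρ'.Ve)) where
  toFun g := (g.2.1 ∘ₗ ρ.rbp - ρ'.rbp ∘ₗ g.1,
              g.2.2.1 ∘ₗ ρ.rbq - ρ'.rbq ∘ₗ g.1,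
              g.2.2.2 ∘ₗ ρ.rpe - ρ'.rpe ∘ₗ g.2.1,
              g.2.2.2 ∘ₗ ρ.rqe - ρ'.rqe ∘ₗ g.2.2.1)
  map_add' g h := by
    refine Prod.ext ?_ (Prod.ext ?_ (Prod.ext ?_ ?_)) <;>
      · simp only [Prod.fst_add, Prod.snd_add, LinearMap.add_comp, LinearMap.comp_add]
        abel
  map_smul' c g := by
    refine Prod.ext ?_ (Prod.ext ?_ (Prod.ext ?_ ?_)) <;>
      simp [LinearMap.smul_comp, LinearMap.comp_smul, smul_sub]

/-- `ext1 ρ ρ'` is the `k`-dimension of the cokernel of `Φ`; it equals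
`dim Ext¹(ρ, ρ')` in the abelian category of representations of `Q2`. -/
def ext1 (ρ ρ' : RepQ2 k) : ℕ :=
  finrank k (((ρ.Vb →ₗ[k] ρ'.Vp) × (ρ.Vb →ₗ[k] ρ'.Vq) ×
      (ρ.Vp →ₗ[k] ρ'.Ve) × (ρ.Vq →ₗ[k] ρ'.Ve)) ⧸ LinearMap.range (phi ρ ρ'))

/-- A representation is exceptional if `hom ρ ρ = 1` and `ext1 ρ ρ = 0`. -/
def IsExceptional (ρ : RepQ2 k) : Prop := hom ρ ρ = 1 ∧ ext1 ρ ρ = 0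

/-- Isomorphism of representations of `Q2`. -/
def Iso (ρ ρ' : RepQ2 k) : Prop :=
  ∃ (eb : ρ.Vb ≃ₗ[k] ρ'.Vb) (ep : ρ.Vp ≃ₗ[k] ρ'.Vp)
    (eq' : ρ.Vq ≃ₗ[k] ρ'.Vq) (ee : ρ.Ve ≃ₗ[k] ρ'.Ve),
    ep.toLinearMap ∘ₗ ρ.rbp = ρ'.rbp ∘ₗ eb.toLinearMap ∧
    eq'.toLinearMap ∘ₗ ρ.rbq = ρ'.rbq ∘ₗ eb.toLinearMap ∧
    ee.toLinearMap ∘ₗ ρ.rpe = ρ'.rpe ∘ₗ ep.toLinearMap ∧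
    ee.toLinearMap ∘ₗ ρ.rqe = ρ'.rqe ∘ₗ eq'.toLinearMap

end RepQ2

variable (k : Type u) [Field k]

/-- `π₊^m : k^{m+1} → k^m`, `(a₁,…,a_{m+1}) ↦ (a₁,…,a_m)`. -/
def piPlus (m : ℕ) : (Fin (m + 1) → k) →ₗ[k] (Fin m → k) :=
  LinearMap.funLeft k k Fin.castSucc

/-- `π₋^m : k^{m+1} → k^m`, `(a₁,…,a_{m+1}) ↦ (a₂,…,a_{m+1})`. -/
def piMinus (m : ℕ) : (Fin (m + 1) → k) →ₗ[k] (Fin m → k) :=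
  LinearMap.funLeft k k Fin.succ

/-- `j₊^m : k^m → k^{m+1}`, `(a₁,…,a_m) ↦ (a₁,…,a_m,0)`. -/
def jPlus (m : ℕ) : (Fin m → k) →ₗ[k] (Fin (m + 1) → k) where
  toFun a := Fin.snoc a 0
  map_add' a b := by
    ext i
    induction i using Fin.lastCases <;> simp
  map_smul' c a := by
    ext i
    induction i using Fin.lastCases <;> simp

/-- `j₋^m : k^m → k^{m+1}`, `(a₁,…,a_m) ↦ (0,a₁,…,a_m)`. -/
def jMinus (m : ℕ) : (Fin m → k) →ₗ[k] (Fin (m + 1) → k) where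
  toFun a := Fin.cons 0 a
  map_add' a b := by
    ext i
    induction i using Fin.cases <;> simp
  map_smul' c a := by
    ext i
    induction i using Fin.cases <;> simp

/-- `E₁^m = (k^{m+1}, k^m, k^m, k^m)` with `ρ_bp = π₊^m`, `ρ_bq = π₋^m`, `ρ_pe = id`, `ρ_qe = id`. -/
def E1 (m : ℕ) : RepQ2 k where
  Vb := Fin (m + 1) → k
  Vp := Fin m → k
  Vq := Fin m → k
  Ve := Fin m → k
  rbp := piPlus k m
  rbq := piMinus k m
  rpe := LinearMap.id
  rqe := LinearMap.id

/-- `E₂^m = (k^m, k^{m+1}, k^{m+1}, k^{m+1})` with `ρ_bp = j₊^m`, `ρ_bq = j₋^m`, `ρ_pe = id`, `ρ_qe = id`. -/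
def E2 (m : ℕ) : RepQ2 k where
  Vb := Fin m → k
  Vp := Fin (m + 1) → k
  Vq := Fin (m + 1) → k
  Ve := Fin (m + 1) → k
  rbp := jPlus k m
  rbq := jMinus k m
  rpe := LinearMap.id
  rqe := LinearMap.id

/-- `E₃^m = (k^m, k^m, k^m, k^{m+1})` with `ρ_bp = id`, `ρ_bq = id`, `ρ_pe = j₊^m`, `ρ_qe = j₋^m`. -/
def E3 (m : ℕ) : RepQ2 k where
  Vb := Fin m → k
  Vp := Fin m → k
  Vq := Fin m → k
  Ve := Fin (m + 1) → k
  rbp := LinearMap.id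
  rbq := LinearMap.id
  rpe := jPlus k m
  rqe := jMinus k m

/-- `E₄^m = (k^{m+1}, k^{m+1}, k^{m+1}, k^m)` with `ρ_bp = id`, `ρ_bq = id`, `ρ_pe = π₊^m`, `ρ_qe = π₋^m`. -/
def E4 (m : ℕ) : RepQ2 k where
  Vb := Fin (m + 1) → k
  Vp := Fin (m + 1) → k
  Vq := Fin (m + 1) → k
  Ve := Fin m → k
  rbp := LinearMap.id
  rbq := LinearMap.id
  rpe := piPlus k m
  rqe := piMinus k m

/-- `E₅^m = (k^m, k^m, k^{m+1}, k^{m+1})` with `ρ_bp = id`, `ρ_bq = j₋^m`, `ρ_pe = j₊^m`, `ρ_qe = id`. -/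
def E5 (m : ℕ) : RepQ2 k where
  Vb := Fin m → k
  Vp := Fin m → k
  Vq := Fin (m + 1) → k
  Ve := Fin (m + 1) → k
  rbp := LinearMap.id
  rbq := jMinus k m
  rpe := jPlus k m
  rqe := LinearMap.id

/-- `E₆^m = (k^{m+1}, k^{m+1}, k^m, k^m)` with `ρ_bp = id`, `ρ_bq = π₋^m`, `ρ_pe = π₊^m`, `ρ_qe = id`. -/
def E6 (m : ℕ) : RepQ2 k where
  Vb := Fin (m + 1) → k
  Vp := Fin (m + 1) → k
  Vq := Fin m → k
  Ve := Fin m → k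
  rbp := LinearMap.id
  rbq := piMinus k m
  rpe := piPlus k m
  rqe := LinearMap.id

/-- `E₇^m = (k^{m+1}, k^m, k^{m+1}, k^m)` with `ρ_bp = π₊^m`, `ρ_bq = id`, `ρ_pe = id`, `ρ_qe = π₋^m`. -/
def E7 (m : ℕ) : RepQ2 k where
  Vb := Fin (m + 1) → k
  Vp := Fin m → k
  Vq := Fin (m + 1) → k
  Ve := Fin m → k
  rbp := piPlus k m
  rbq := LinearMap.id
  rpe := LinearMap.id
  rqe := piMinus k m

/-- `E₈^m = (k^m, k^{m+1}, k^m, k^{m+1})` with `ρ_bp = j₊^m`, `ρ_bq = id`, `ρ_pe = id`, `ρ_qe = j₋^m`. -/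
def E8 (m : ℕ) : RepQ2 k where
  Vb := Fin m → k
  Vp := Fin (m + 1) → k
  Vq := Fin m → k
  Ve := Fin (m + 1) → k
  rbp := jPlus k m
  rbq := LinearMap.id
  rpe := LinearMap.id
  rqe := jMinus k m

/-- `F₊ = (0, k, 0, 0)` with zero structure maps. -/
def Fplus : RepQ2 k where
  Vb := Fin 0 → k
  Vp := Fin 1 → k
  Vq := Fin 0 → k
  Ve := Fin 0 → k
  rbp := 0
  rbq := 0
  rpe := 0
  rqe := 0

/-- `F₋ = (0, 0, k, 0)` with zero structure maps. -/
def Fminus : RepQ2 k where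
  Vb := Fin 0 → k
  Vp := Fin 0 → k
  Vq := Fin 1 → k
  Ve := Fin 0 → k
  rbp := 0
  rbq := 0
  rpe := 0
  rqe := 0

/-- `G₊ = (k, k, 0, k)` with `ρ_bp = id`, `ρ_pe = id` and the other structure maps zero. -/
def Gplus : RepQ2 k where
  Vb := Fin 1 → k
  Vp := Fin 1 → k
  Vq := Fin 0 → k
  Ve := Fin 1 → k
  rbp := LinearMap.id
  rbq := 0
  rpe := LinearMap.id
  rqe := 0

/-- `G₋ = (k, 0, k, k)` with `ρ_bq = id`, `ρ_qe = id` and the other structure maps zero. -/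
def Gminus : RepQ2 k where
  Vb := Fin 1 → k
  Vp := Fin 0 → k
  Vq := Fin 1 → k
  Ve := Fin 1 → k
  rbp := 0
  rbq := LinearMap.id
  rpe := 0
  rqe := LinearMap.id



section Aux

variable {k : Type u} [Field k] {V W : Type u} [AddCommGroup V] [Module k V]
  [AddCommGroup W] [Module k W]

lemma aux_exists_ker [FiniteDimensional k V] [FiniteDimensional k W] (f : V →ₗ[k] W)
    (h : finrank k W < finrank k V) : ∃ x : V, x ≠ 0 ∧ f x = 0 := by
  by_contra hc
  push_neg at hc
  have hinj : Function.Injective f := by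
    rw [← LinearMap.ker_eq_bot, Submodule.eq_bot_iff]
    intro x hx
    by_contra hx0
    exact hc x hx0 (LinearMap.mem_ker.mp hx)
  exact absurd (LinearMap.finrank_le_finrank_of_injective hinj) (Nat.not_le.mpr h)

lemma aux_dual_ne [FiniteDimensional k V] (x : V) (hx : x ≠ 0) :
    ∃ φ : V →ₗ[k] k, φ x ≠ 0 := by
  by_contra hc
  push_neg at hc
  exact hx ((Module.forall_dual_apply_eq_zero_iff k x).mp fun φ => hc φ)

lemma aux_exists_ann [FiniteDimensional k V] [FiniteDimensional k W] (f : V →ₗ[k] W)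
    (h : finrank k V < finrank k W) :
    ∃ φ : W →ₗ[k] k, (∃ w, φ w ≠ 0) ∧ φ ∘ₗ f = 0 := by
  set R := LinearMap.range f with hR
  have h1 : finrank k R ≤ finrank k V := LinearMap.finrank_range_le f
  have h2 : finrank k (W ⧸ R) + finrank k R = finrank k W :=
    Submodule.finrank_quotient_add_finrank R
  have h3 : 0 < finrank k (W ⧸ R) := by omega
  have : Nontrivial (W ⧸ R) := finrank_pos_iff.mp h3
  obtain ⟨v, hv⟩ := exists_ne (0 : W ⧸ R)
  obtain ⟨ψ, hψ⟩ := aux_dual_ne (k := k) v hv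
  obtain ⟨w, hw⟩ := R.mkQ_surjective v
  refine ⟨ψ ∘ₗ R.mkQ, ⟨w, by simp [hw, hψ]⟩, ?_⟩
  refine LinearMap.ext fun x => ?_
  have hz : R.mkQ (f x) = 0 := (Submodule.Quotient.mk_eq_zero R).mpr ⟨x, rfl⟩
  simp [LinearMap.comp_apply, hz]

lemma aux_id_ne_zero [FiniteDimensional k V] (h : 0 < finrank k V) :
    (LinearMap.id : V →ₗ[k] V) ≠ 0 := by
  have : Nontrivial V := finrank_pos_iff.mp h
  obtain ⟨x, hx⟩ := exists_ne (0 : V)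
  intro h0
  exact hx (by simpa using LinearMap.ext_iff.mp h0 x)

lemma aux_smulRight_elim (φ : V →ₗ[k] k) (x : W) (h : φ.smulRight x = 0)
    (v : V) (hv : φ v ≠ 0) : x = 0 := by
  have := LinearMap.ext_iff.mp h v
  simp only [LinearMap.smulRight_apply, LinearMap.zero_apply] at this
  rcases smul_eq_zero.mp this with h' | h'
  · exact absurd h' hv
  · exact h'

end Aux


section Vanish
variable {k : Type u} [Field k]

lemma vanish_aux {ρ : RepQ2 k} (hh : ρ.hom ρ = 1) {M : Type u} [AddCommGroup M] [Module k M]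
    (π : ((ρ.Vb →ₗ[k] ρ.Vb) × (ρ.Vp →ₗ[k] ρ.Vp) × (ρ.Vq →ₗ[k] ρ.Vq) ×
      (ρ.Ve →ₗ[k] ρ.Ve)) →ₗ[k] M)
    (hπ : π (LinearMap.id, LinearMap.id, LinearMap.id, LinearMap.id) ≠ 0)
    {f} (hf : f ∈ ρ.homSpace ρ) (hπf : π f = 0) : f = 0 := by
  have hid : ((LinearMap.id, LinearMap.id, LinearMap.id, LinearMap.id) :
      (ρ.Vb →ₗ[k] ρ.Vb) × (ρ.Vp →ₗ[k] ρ.Vp) × (ρ.Vq →ₗ[k] ρ.Vq) × (ρ.Ve →ₗ[k] ρ.Ve)) ∈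
      ρ.homSpace ρ := by
    refine ⟨?_, ?_, ?_, ?_⟩ <;> simp
  have hh' : finrank k (ρ.homSpace ρ) = 1 := hh
  obtain ⟨v, hv0, hv⟩ := finrank_eq_one_iff'.mp hh'
  obtain ⟨a, ha⟩ := hv ⟨_, hid⟩
  obtain ⟨b, hb⟩ := hv ⟨f, hf⟩
  have haa : a • (v : (ρ.Vb →ₗ[k] ρ.Vb) × (ρ.Vp →ₗ[k] ρ.Vp) × (ρ.Vq →ₗ[k] ρ.Vq) ×
      (ρ.Ve →ₗ[k] ρ.Ve)) = (LinearMap.id, LinearMap.id, LinearMap.id, LinearMap.id) :=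
    congrArg Subtype.val ha
  have hbb : b • (v : (ρ.Vb →ₗ[k] ρ.Vb) × (ρ.Vp →ₗ[k] ρ.Vp) × (ρ.Vq →ₗ[k] ρ.Vq) ×
      (ρ.Ve →ₗ[k] ρ.Ve)) = f := congrArg Subtype.val hb
  have hπv : π (v : _) ≠ 0 := by
    intro h0
    apply hπ
    rw [← haa, map_smul, h0, smul_zero]
  have hb0 : b = 0 := by
    have hz : b • π (v : _) = 0 := by rw [← map_smul, hbb, hπf]
    rcases smul_eq_zero.mp hz with h | h
    · exact h
    · exact absurd h hπv
  rw [← hbb, hb0, zero_smul]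

end Vanish

/-- For `m ≥ 1`, no exceptional representation of `Q2` has dimension vector
`(α_b, α₋, α₊, α_e) = (dim V_b, dim V_q, dim V_p, dim V_e)` equal to
`(m, m+1, m, m)`, `(m, m, m+1, m)`, `(m+1, m, m+1, m+1)` or `(m+1, m+1, m, m+1)`. -/
theorem statement_16 (k : Type u) [Field k] [IsAlgClosed k] (m : ℕ) (hm : 1 ≤ m)
    (ρ : RepQ2 k) (hρ : ρ.IsExceptional) :
    ¬((finrank k ρ.Vb = m ∧ finrank k ρ.Vq = m + 1 ∧ finrank k ρ.Vp = m ∧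
        finrank k ρ.Ve = m) ∨
      (finrank k ρ.Vb = m ∧ finrank k ρ.Vq = m ∧ finrank k ρ.Vp = m + 1 ∧
        finrank k ρ.Ve = m) ∨
      (finrank k ρ.Vb = m + 1 ∧ finrank k ρ.Vq = m ∧ finrank k ρ.Vp = m + 1 ∧
        finrank k ρ.Ve = m + 1) ∨
      (finrank k ρ.Vb = m + 1 ∧ finrank k ρ.Vq = m + 1 ∧ finrank k ρ.Vp = m ∧
        finrank k ρ.Ve = m + 1)) := by
  intro hdims
  obtain ⟨hhom, -⟩ := hρ
  rcases hdims with ⟨hb, hq, hp, he⟩ | ⟨hb, hq, hp, he⟩ | ⟨hb, hq, hp, he⟩ | ⟨hb, hq, hp, he⟩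
  · -- (m, m+1, m, m) : rank-one endomorphism supported at q
    obtain ⟨x₀, hx0, hDx⟩ := aux_exists_ker ρ.rqe (by rw [hq, he]; omega)
    obtain ⟨lam, ⟨w, hw⟩, hlB⟩ := aux_exists_ann ρ.rbq (by rw [hb, hq]; omega)
    have hl' : ∀ v, lam (ρ.rbq v) = 0 := fun v => by
      simpa using LinearMap.ext_iff.mp hlB v
    have hf : ((0, 0, lam.smulRight x₀, 0) :
        (ρ.Vb →ₗ[k] ρ.Vb) × (ρ.Vp →ₗ[k] ρ.Vp) × (ρ.Vq →ₗ[k] ρ.Vq) × (ρ.Ve →ₗ[k] ρ.Ve)) ∈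
        ρ.homSpace ρ := by
      refine ⟨by simp, ?_, by simp, ?_⟩
      · refine LinearMap.ext fun v => ?_
        simp [hl' v]
      · refine LinearMap.ext fun v => ?_
        simp [hDx]
    have hf0 := vanish_aux hhom (LinearMap.fst k _ _)
      (by simpa using aux_id_ne_zero (k := k) (V := ρ.Vb) (by omega)) hf (by simp)
    have hq0 : lam.smulRight x₀ = 0 := congrArg (fun t => t.2.2.1) hf0
    exact hx0 (aux_smulRight_elim lam x₀ hq0 w hw)
  · -- (m, m, m+1, m) : rank-one endomorphism supported at p
    obtain ⟨x₀, hx0, hCx⟩ := aux_exists_ker ρ.rpe (by rw [hp, he]; omega)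
    obtain ⟨lam, ⟨w, hw⟩, hlA⟩ := aux_exists_ann ρ.rbp (by rw [hb, hp]; omega)
    have hl' : ∀ v, lam (ρ.rbp v) = 0 := fun v => by
      simpa using LinearMap.ext_iff.mp hlA v
    have hf : ((0, lam.smulRight x₀, 0, 0) :
        (ρ.Vb →ₗ[k] ρ.Vb) × (ρ.Vp →ₗ[k] ρ.Vp) × (ρ.Vq →ₗ[k] ρ.Vq) × (ρ.Ve →ₗ[k] ρ.Ve)) ∈
        ρ.homSpace ρ := by
      refine ⟨?_, by simp, ?_, by simp⟩
      · refine LinearMap.ext fun v => ?_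
        simp [hl' v]
      · refine LinearMap.ext fun v => ?_
        simp [hCx]
    have hf0 := vanish_aux hhom (LinearMap.fst k _ _)
      (by simpa using aux_id_ne_zero (k := k) (V := ρ.Vb) (by omega)) hf (by simp)
    have hp0 : lam.smulRight x₀ = 0 := congrArg (fun t => t.2.1) hf0
    exact hx0 (aux_smulRight_elim lam x₀ hp0 w hw)
  · -- (m+1, m, m+1, m+1)
    obtain ⟨x₀, hx0, hBx⟩ := aux_exists_ker ρ.rbq (by rw [hb, hq]; omega)
    obtain ⟨lam, ⟨w, hw⟩, hlD⟩ := aux_exists_ann ρ.rqe (by rw [hq, he]; omega)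
    have hl' : ∀ v, lam (ρ.rqe v) = 0 := fun v => by
      simpa using LinearMap.ext_iff.mp hlD v
    set πq : ((ρ.Vb →ₗ[k] ρ.Vb) × (ρ.Vp →ₗ[k] ρ.Vp) × (ρ.Vq →ₗ[k] ρ.Vq) ×
        (ρ.Ve →ₗ[k] ρ.Ve)) →ₗ[k] (ρ.Vq →ₗ[k] ρ.Vq) :=
      (LinearMap.fst k _ _) ∘ₗ (LinearMap.snd k _ _) ∘ₗ (LinearMap.snd k _ _) with hπq
    have hπid : πq (LinearMap.id, LinearMap.id, LinearMap.id, LinearMap.id) ≠ 0 := by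
      simpa [hπq] using aux_id_ne_zero (k := k) (V := ρ.Vq) (by omega)
    -- step 1 : rpe (rbp x₀) = 0
    have hf1 : (((lam ∘ₗ (ρ.rpe ∘ₗ ρ.rbp)).smulRight x₀,
        (lam ∘ₗ ρ.rpe).smulRight (ρ.rbp x₀), 0,
        lam.smulRight (ρ.rpe (ρ.rbp x₀))) :
        (ρ.Vb →ₗ[k] ρ.Vb) × (ρ.Vp →ₗ[k] ρ.Vp) × (ρ.Vq →ₗ[k] ρ.Vq) × (ρ.Ve →ₗ[k] ρ.Ve)) ∈
        ρ.homSpace ρ := by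
      refine ⟨?_, ?_, ?_, ?_⟩
      · refine LinearMap.ext fun v => ?_; simp
      · refine LinearMap.ext fun v => ?_; simp [hBx]
      · refine LinearMap.ext fun v => ?_; simp
      · refine LinearMap.ext fun v => ?_; simp [hl' v]
    have hf10 := vanish_aux hhom πq hπid hf1 (by simp [hπq])
    have hP : ρ.rpe (ρ.rbp x₀) = 0 := by
      have he0 : lam.smulRight (ρ.rpe (ρ.rbp x₀)) = 0 := congrArg (fun t => t.2.2.2) hf10
      exact aux_smulRight_elim lam _ he0 w hw
    -- step 2 : rbp x₀ = 0
    have hA : ρ.rbp x₀ = 0 := by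
      by_contra hA
      obtain ⟨φ, hφ⟩ := aux_dual_ne (k := k) (ρ.rbp x₀) hA
      have hf2 : (((φ ∘ₗ ρ.rbp).smulRight x₀, φ.smulRight (ρ.rbp x₀), 0, 0) :
          (ρ.Vb →ₗ[k] ρ.Vb) × (ρ.Vp →ₗ[k] ρ.Vp) × (ρ.Vq →ₗ[k] ρ.Vq) × (ρ.Ve →ₗ[k] ρ.Ve)) ∈
          ρ.homSpace ρ := by
        refine ⟨?_, ?_, ?_, ?_⟩
        · refine LinearMap.ext fun v => ?_; simp
        · refine LinearMap.ext fun v => ?_; simp [hBx]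
        · refine LinearMap.ext fun v => ?_; simp [hP]
        · refine LinearMap.ext fun v => ?_; simp
      have hf20 := vanish_aux hhom πq hπid hf2 (by simp [hπq])
      have hp0 : φ.smulRight (ρ.rbp x₀) = 0 := congrArg (fun t => t.2.1) hf20
      exact hA (aux_smulRight_elim φ _ hp0 _ hφ)
    -- step 3 : contradiction
    obtain ⟨μ, hμ⟩ := aux_dual_ne (k := k) x₀ hx0
    have hf3 : ((μ.smulRight x₀, 0, 0, 0) :
        (ρ.Vb →ₗ[k] ρ.Vb) × (ρ.Vp →ₗ[k] ρ.Vp) × (ρ.Vq →ₗ[k] ρ.Vq) × (ρ.Ve →ₗ[k] ρ.Ve)) ∈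
        ρ.homSpace ρ := by
      refine ⟨?_, ?_, by simp, by simp⟩
      · refine LinearMap.ext fun v => ?_; simp [hA]
      · refine LinearMap.ext fun v => ?_; simp [hBx]
    have hf30 := vanish_aux hhom πq hπid hf3 (by simp [hπq])
    have hb0 : μ.smulRight x₀ = 0 := congrArg (fun t => t.1) hf30
    exact hx0 (aux_smulRight_elim μ x₀ hb0 x₀ hμ)
  · -- (m+1, m+1, m, m+1)
    obtain ⟨x₀, hx0, hAx⟩ := aux_exists_ker ρ.rbp (by rw [hb, hp]; omega)
    obtain ⟨lam, ⟨w, hw⟩, hlC⟩ := aux_exists_ann ρ.rpe (by rw [hp, he]; omega)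
    have hl' : ∀ v, lam (ρ.rpe v) = 0 := fun v => by
      simpa using LinearMap.ext_iff.mp hlC v
    set πp : ((ρ.Vb →ₗ[k] ρ.Vb) × (ρ.Vp →ₗ[k] ρ.Vp) × (ρ.Vq →ₗ[k] ρ.Vq) ×
        (ρ.Ve →ₗ[k] ρ.Ve)) →ₗ[k] (ρ.Vp →ₗ[k] ρ.Vp) :=
      (LinearMap.fst k _ _) ∘ₗ (LinearMap.snd k _ _) with hπp
    have hπid : πp (LinearMap.id, LinearMap.id, LinearMap.id, LinearMap.id) ≠ 0 := by
      simpa [hπp] using aux_id_ne_zero (k := k) (V := ρ.Vp) (by omega)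
    -- step 1 : rqe (rbq x₀) = 0
    have hf1 : (((lam ∘ₗ (ρ.rqe ∘ₗ ρ.rbq)).smulRight x₀, 0,
        (lam ∘ₗ ρ.rqe).smulRight (ρ.rbq x₀),
        lam.smulRight (ρ.rqe (ρ.rbq x₀))) :
        (ρ.Vb →ₗ[k] ρ.Vb) × (ρ.Vp →ₗ[k] ρ.Vp) × (ρ.Vq →ₗ[k] ρ.Vq) × (ρ.Ve →ₗ[k] ρ.Ve)) ∈
        ρ.homSpace ρ := by
      refine ⟨?_, ?_, ?_, ?_⟩
      · refine LinearMap.ext fun v => ?_; simp [hAx]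
      · refine LinearMap.ext fun v => ?_; simp
      · refine LinearMap.ext fun v => ?_; simp [hl' v]
      · refine LinearMap.ext fun v => ?_; simp
    have hf10 := vanish_aux hhom πp hπid hf1 (by simp [hπp])
    have hQ : ρ.rqe (ρ.rbq x₀) = 0 := by
      have he0 : lam.smulRight (ρ.rqe (ρ.rbq x₀)) = 0 := congrArg (fun t => t.2.2.2) hf10
      exact aux_smulRight_elim lam _ he0 w hw
    -- step 2 : rbq x₀ = 0
    have hB : ρ.rbq x₀ = 0 := by
      by_contra hB
      obtain ⟨φ, hφ⟩ := aux_dual_ne (k := k) (ρ.rbq x₀) hB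
      have hf2 : (((φ ∘ₗ ρ.rbq).smulRight x₀, 0, φ.smulRight (ρ.rbq x₀), 0) :
          (ρ.Vb →ₗ[k] ρ.Vb) × (ρ.Vp →ₗ[k] ρ.Vp) × (ρ.Vq →ₗ[k] ρ.Vq) × (ρ.Ve →ₗ[k] ρ.Ve)) ∈
          ρ.homSpace ρ := by
        refine ⟨?_, ?_, ?_, ?_⟩
        · refine LinearMap.ext fun v => ?_; simp [hAx]
        · refine LinearMap.ext fun v => ?_; simp
        · refine LinearMap.ext fun v => ?_; simp
        · refine LinearMap.ext fun v => ?_; simp [hQ]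
      have hf20 := vanish_aux hhom πp hπid hf2 (by simp [hπp])
      have hq0 : φ.smulRight (ρ.rbq x₀) = 0 := congrArg (fun t => t.2.2.1) hf20
      exact hB (aux_smulRight_elim φ _ hq0 _ hφ)
    -- step 3 : contradiction
    obtain ⟨μ, hμ⟩ := aux_dual_ne (k := k) x₀ hx0
    have hf3 : ((μ.smulRight x₀, 0, 0, 0) :
        (ρ.Vb →ₗ[k] ρ.Vb) × (ρ.Vp →ₗ[k] ρ.Vp) × (ρ.Vq →ₗ[k] ρ.Vq) × (ρ.Ve →ₗ[k] ρ.Ve)) ∈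
        ρ.homSpace ρ := by
      refine ⟨?_, ?_, by simp, by simp⟩
      · refine LinearMap.ext fun v => ?_; simp [hAx]
      · refine LinearMap.ext fun v => ?_; simp [hB]
    have hf30 := vanish_aux hhom πp hπid hf3 (by simp [hπp])
    have hb0 : μ.smulRight x₀ = 0 := congrArg (fun t => t.1) hf30
    exact hx0 (aux_smulRight_elim μ x₀ hb0 x₀ hμ)
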